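/- Let α ∈ ℝ, z = e^{iα}, N ≥ 1, and let (N0,N1,N2) be nonnegative integers with N0+N1+N2 = N. If J, K : Fin N → Fin 2 take the value 1 the same number of times, then ∑_{L ∈ [N0,N1,N2]} ∏_{p<N} (A'_α)_{J(p),L(p)} = ∑_{L ∈ [N0,N1,N2]} ∏_{p<N} (A'_α)_{K(p),L(p)}; i.e., rows of B_{α,N} whose binary labels have the same number of ones are identical. -/

import Mathlib

open Complex Finset

/-- The matrix `A'_α` with rows `(1, 0, -e^{2iα})` and `(0, 1, e^{iα})`. -/
noncomputable def Amat' (α : ℝ) : Matrix (Fin 2) (Fin 3) ℂ :=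
  !![1, 0, -Complex.exp (α * Complex.I) ^ 2;
     0, 1, Complex.exp (α * Complex.I)]

/-- The number of coordinates of `L` equal to `i`. -/
def cnt {N : ℕ} (L : Fin N → Fin 3) (i : Fin 3) : ℕ :=
  (Finset.univ.filter fun p => L p = i).card

lemma cnt_comp {N : ℕ} (σ : Equiv.Perm (Fin N)) (L : Fin N → Fin 3) (i : Fin 3) :
    cnt (L ∘ σ) i = cnt L i := by
  unfold cnt
  apply Finset.card_nbij' (i := fun p => σ p) (j := fun q => σ.symm q) <;> intro x hx <;> simp_all

lemma exists_perm {N : ℕ} (J K : Fin N → Fin 2)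
    (hJK : (Finset.univ.filter fun p => J p = 1).card =
           (Finset.univ.filter fun p => K p = 1).card) :
    ∃ σ : Equiv.Perm (Fin N), ∀ p, J (σ p) = K p := by
  classical
  have hcard : Fintype.card {p // K p = 1} = Fintype.card {p // J p = 1} := by
    simp only [Fintype.card_subtype]
    exact hJK.symm
  obtain ⟨e⟩ := Fintype.card_eq.mp hcard
  refine ⟨e.extendSubtype, fun p => ?_⟩
  by_cases hp : K p = 1
  · have := e.extendSubtype_mem p hp
    rw [this, hp]
  · have h1 := e.extendSubtype_not_mem p hp
    have h2 : K p ≠ 1 := hp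
    omega

/-- Rows of `B_{α,N}` whose binary labels have the same number of ones are
identical. -/
theorem B_rows_eq (α : ℝ) (N : ℕ) (hN : 1 ≤ N) (N0 N1 N2 : ℕ)
    (hsum : N0 + N1 + N2 = N) (J K : Fin N → Fin 2)
    (hJK : (Finset.univ.filter fun p => J p = 1).card =
           (Finset.univ.filter fun p => K p = 1).card) :
    ∑ L ∈ Finset.univ.filter
        (fun L : Fin N → Fin 3 => cnt L 0 = N0 ∧ cnt L 1 = N1 ∧ cnt L 2 = N2),
      ∏ p : Fin N, Amat' α (J p) (L p) =
    ∑ L ∈ Finset.univ.filter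
        (fun L : Fin N → Fin 3 => cnt L 0 = N0 ∧ cnt L 1 = N1 ∧ cnt L 2 = N2),
      ∏ p : Fin N, Amat' α (K p) (L p) := by
  classical
  obtain ⟨σ, hσ⟩ := exists_perm J K hJK
  refine Finset.sum_nbij' (i := fun L => L ∘ σ) (j := fun L => L ∘ σ.symm) ?_ ?_ ?_ ?_ ?_
  · intro L hL
    simp only [Finset.mem_filter, Finset.mem_univ, true_and] at hL ⊢
    simp [cnt_comp, hL]
  · intro L hL
    simp only [Finset.mem_filter, Finset.mem_univ, true_and] at hL ⊢
    have := fun i => cnt_comp σ (L ∘ σ.symm) i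
    simp only [Function.comp_assoc] at this
    simp only [Equiv.symm_comp_self, Function.comp_id] at this
    simp only [← this]
    exact hL
  · intro L _
    ext p
    simp
  · intro L _
    ext p
    simp
  · intro L _
    rw [← Equiv.prod_comp σ (fun q => Amat' α (J q) (L q))]
    exact Finset.prod_congr rfl (fun p _ => by rw [hσ p]; rfl)
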